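/- Let F_1, …, F_D be N×N complex Hermitian matrices. Then the minimum over x ∈ [0,1]^D of λ_max(I + ∑_{p=1}^D x_p F_p) equals the supremum over all N×N density matrices Z of the quantity 1 + ∑_{p=1}^D min(Tr(Z F_p), 0). (Both sides are attained; in particular Tr(Z F_p) is real since Z and F_p are Hermitian.) -/

import Mathlib

open Matrix
open scoped ComplexOrder

/-- The largest eigenvalue of a Hermitian matrix. -/
noncomputable def lamMax {N : ℕ} {M : Matrix (Fin N) (Fin N) ℂ}
    (hM : M.IsHermitian) : ℝ :=
  ⨆ i, hM.eigenvalues i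

variable {N : ℕ}

instance matrixFirstCountable :
    FirstCountableTopology (Matrix (Fin N) (Fin N) ℂ) :=
  inferInstanceAs (FirstCountableTopology ((Fin N) → (Fin N) → ℂ))

lemma diag_re_nonneg {Z : Matrix (Fin N) (Fin N) ℂ} (hZ : Z.PosSemidef) (i : Fin N) :
    0 ≤ (Z i i).re := by
  have := hZ.re_dotProduct_nonneg (Pi.single i 1)
  simpa [Matrix.mulVec_single, dotProduct, Pi.single_apply, Finset.sum_ite_eq',
    apply_ite] using this

lemma diag_im_zero {Z : Matrix (Fin N) (Fin N) ℂ} (hZ : Z.IsHermitian) (i : Fin N) :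
    (Z i i).im = 0 := by
  have := congrFun (congrFun hZ i) i
  simp [Matrix.conjTranspose_apply] at this
  exact Complex.conj_eq_iff_im.mp this

lemma trace_mul_diagonal' (A : Matrix (Fin N) (Fin N) ℂ) (d : Fin N → ℂ) :
    (A * diagonal d).trace = ∑ i, A i i * d i := by
  simp [Matrix.trace, Matrix.diag, Matrix.mul_diagonal]

lemma trace_unitary_conj {U A : Matrix (Fin N) (Fin N) ℂ}
    (hU : U ∈ Matrix.unitaryGroup (Fin N) ℂ) :
    (U * A * star U).trace = A.trace := by
  rw [Matrix.trace_mul_comm, ← mul_assoc, Matrix.mem_unitaryGroup_iff'.mp hU, one_mul]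

lemma lamMax_eq_max (hN : 0 < N) {M : Matrix (Fin N) (Fin N) ℂ} (hM : M.IsHermitian) :
    ∃ i, lamMax hM = hM.eigenvalues i ∧ ∀ j, hM.eigenvalues j ≤ hM.eigenvalues i := by
  have : Nonempty (Fin N) := ⟨⟨0, hN⟩⟩
  obtain ⟨i, hi⟩ := Finite.exists_max hM.eigenvalues
  exact ⟨i, le_antisymm (ciSup_le hi) (le_ciSup (Set.Finite.bddAbove (Set.finite_range _)) i), hi⟩

lemma eigenvalue_le_lamMax {M : Matrix (Fin N) (Fin N) ℂ} (hM : M.IsHermitian) (i : Fin N) :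
    hM.eigenvalues i ≤ lamMax hM :=
  le_ciSup (Set.Finite.bddAbove (Set.finite_range _)) i

lemma trace_mul_re_le_lamMax {Z M : Matrix (Fin N) (Fin N) ℂ} (hM : M.IsHermitian)
    (hZ : Z.PosSemidef) (hTr : Z.trace = 1) :
    ((Z * M).trace).re ≤ lamMax hM := by
  classical
  set U : Matrix (Fin N) (Fin N) ℂ := (hM.eigenvectorUnitary : Matrix (Fin N) (Fin N) ℂ) with hUdef
  have hUmem : U ∈ Matrix.unitaryGroup (Fin N) ℂ := hM.eigenvectorUnitary.2
  set W : Matrix (Fin N) (Fin N) ℂ := star U * Z * U with hW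
  have hWpsd : W.PosSemidef := by
    rw [hW, Matrix.star_eq_conjTranspose]; exact hZ.conjTranspose_mul_mul_same (U)
  have hWtr : W.trace = 1 := by
    rw [hW, Matrix.trace_mul_comm, ← mul_assoc, Matrix.mem_unitaryGroup_iff.mp hUmem, one_mul, hTr]
  have hZM : (Z * M).trace = ∑ i, W i i * (hM.eigenvalues i : ℂ) := by
    conv_lhs => rw [hM.spectral_theorem, Unitary.conjStarAlgAut_apply]
    rw [show Z * (U * diagonal (RCLike.ofReal ∘ hM.eigenvalues) * star U)
        = (Z * U * diagonal (RCLike.ofReal ∘ hM.eigenvalues)) * star U by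
        rw [← mul_assoc, ← mul_assoc],
      Matrix.trace_mul_comm, ← mul_assoc, ← mul_assoc, ← hW, trace_mul_diagonal']
    rfl
  have hre : ((Z * M).trace).re = ∑ i, (W i i).re * hM.eigenvalues i := by
    rw [hZM, Complex.re_sum]
    congr 1; ext i
    simp [Complex.mul_re]
  rw [hre]
  have h1 : ∑ i, (W i i).re = 1 := by
    have := congrArg Complex.re hWtr
    simpa [Matrix.trace, Matrix.diag, Complex.re_sum] using this
  calc ∑ i, (W i i).re * hM.eigenvalues i
      ≤ ∑ i, (W i i).re * lamMax hM := by
        apply Finset.sum_le_sum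
        intro i _
        exact mul_le_mul_of_nonneg_left (eigenvalue_le_lamMax hM i) (diag_re_nonneg hWpsd i)
    _ = lamMax hM := by rw [← Finset.sum_mul, h1, one_mul]

lemma exists_density_attains (hN : 0 < N) {M : Matrix (Fin N) (Fin N) ℂ} (hM : M.IsHermitian) :
    ∃ Z : Matrix (Fin N) (Fin N) ℂ, Z.PosSemidef ∧ Z.trace = 1 ∧
      ((Z * M).trace).re = lamMax hM := by
  classical
  obtain ⟨i₀, hi₀, _⟩ := lamMax_eq_max hN hM
  set U : Matrix (Fin N) (Fin N) ℂ := (hM.eigenvectorUnitary : Matrix (Fin N) (Fin N) ℂ)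
  have hUmem : U ∈ Matrix.unitaryGroup (Fin N) ℂ := hM.eigenvectorUnitary.2
  have hU1 : star U * U = 1 := Matrix.mem_unitaryGroup_iff'.mp hUmem
  set E : Matrix (Fin N) (Fin N) ℂ := diagonal (Pi.single i₀ 1) with hE
  have hEpsd : E.PosSemidef := by
    refine Matrix.posSemidef_diagonal_iff.mpr fun j => ?_
    by_cases h : j = i₀ <;> simp [h, Pi.single_apply]
  have hPSD : (U * E * star U).PosSemidef := by
    simpa [Matrix.star_eq_conjTranspose] using hEpsd.mul_mul_conjTranspose_same U
  refine ⟨U * E * star U, hPSD, ?_, ?_⟩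
  · rw [trace_unitary_conj hUmem, hE, Matrix.trace_diagonal]
    simp
  · have : (U * E * star U) * M = U * (E * diagonal (RCLike.ofReal ∘ hM.eigenvalues)) * star U := by
      conv_lhs => rw [hM.spectral_theorem, Unitary.conjStarAlgAut_apply]
      rw [show U * E * star U * (U * diagonal (RCLike.ofReal ∘ hM.eigenvalues) * star U)
          = U * E * (star U * U) * diagonal (RCLike.ofReal ∘ hM.eigenvalues) * star U by
        simp only [mul_assoc], hU1, mul_one]
      simp only [mul_assoc]
    rw [this, trace_unitary_conj hUmem, hE, Matrix.diagonal_mul_diagonal, Matrix.trace_diagonal]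
    have : ∑ i, (Pi.single i₀ 1 : Fin N → ℂ) i * (RCLike.ofReal ∘ hM.eigenvalues) i
        = (hM.eigenvalues i₀ : ℂ) := by
      rw [Finset.sum_eq_single i₀]
      · simp
      · intro b _ hb; simp [Pi.single_apply, hb]
      · intro h; exact absurd (Finset.mem_univ i₀) h
    rw [this, hi₀]
    simp

lemma trace_re_sum {Z : Matrix (Fin N) (Fin N) ℂ} (hTr : Z.trace = 1) :
    ∑ k, (Z k k).re = 1 := by
  have := congrArg Complex.re hTr
  simpa [Matrix.trace, Matrix.diag, Complex.re_sum] using this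

lemma dens_diag_le_one {Z : Matrix (Fin N) (Fin N) ℂ} (hZ : Z.PosSemidef) (hTr : Z.trace = 1)
    (i : Fin N) : (Z i i).re ≤ 1 := by
  calc (Z i i).re ≤ ∑ k, (Z k k).re :=
        Finset.single_le_sum (fun k _ => diag_re_nonneg hZ k) (Finset.mem_univ i)
    _ = 1 := trace_re_sum hTr

lemma re_smul_entry_bound {Z : Matrix (Fin N) (Fin N) ℂ} (hZ : Z.PosSemidef)
    (hTr : Z.trace = 1) {i j : Fin N} (hij : i ≠ j) (c : ℂ) (hc : ‖c‖ = 1) :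
    -1 ≤ (c * Z i j).re := by
  classical
  set x : Fin N → ℂ := Pi.single i 1 + Pi.single j c with hx
  have hs : star x = Pi.single i 1 + Pi.single j (star c) := by
    funext k
    by_cases h1 : k = i
    · subst h1; simp [hx, Pi.single_apply, Ne.symm hij, hij]
    · by_cases h2 : k = j
      · subst h2; simp [hx, Pi.single_apply, h1]
      · simp [hx, Pi.single_apply, h1, h2]
  have hmv : Z *ᵥ x = fun k => Z k i + Z k j * c := by
    funext k
    simp [hx, Matrix.mulVec_add, Matrix.mulVec_single]
    ring
  have hq : star x ⬝ᵥ Z *ᵥ x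
      = (Z i i + Z i j * c) + star c * (Z j i + Z j j * c) := by
    rw [hs, hmv, add_dotProduct, single_dotProduct, single_dotProduct]
    ring
  have h0 : 0 ≤ ((Z i i + Z i j * c) + star c * (Z j i + Z j j * c)).re := by
    rw [← hq]; exact hZ.re_dotProduct_nonneg x
  have hji : Z j i = (starRingEnd ℂ) (Z i j) := by
    have := congrFun (congrFun hZ.isHermitian j) i
    simpa [Matrix.conjTranspose_apply] using this.symm
  have hcc : (star c * c : ℂ) = 1 := by
    rw [Complex.star_def, mul_comm, Complex.mul_conj]
    norm_cast
    rw [← Complex.sq_norm, hc]; norm_num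
  have hre : ((Z i i + Z i j * c) + star c * (Z j i + Z j j * c)).re
      = (Z i i).re + (Z j j).re + 2 * (c * Z i j).re := by
    have h1 : star c * (Z j i + Z j j * c) = (starRingEnd ℂ) (c * Z i j) + Z j j := by
      rw [hji, mul_add, Complex.star_def, ← map_mul (starRingEnd ℂ), mul_comm c]
      rw [show (starRingEnd ℂ) c * (Z j j * c) = (star c * c) * Z j j by rw [Complex.star_def]; ring, hcc, one_mul]
    rw [h1]
    simp only [Complex.add_re, Complex.conj_re, Complex.mul_re]
    ring
  rw [hre] at h0
  have d1 := dens_diag_le_one hZ hTr i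
  have d2 := dens_diag_le_one hZ hTr j
  linarith

lemma entry_abs_le_two {Z : Matrix (Fin N) (Fin N) ℂ} (hZ : Z.PosSemidef) (hTr : Z.trace = 1)
    (i j : Fin N) : ‖Z i j‖ ≤ 2 := by
  rcases eq_or_ne i j with rfl | hij
  · calc ‖Z i i‖ ≤ |(Z i i).re| + |(Z i i).im| :=
          Complex.norm_le_abs_re_add_abs_im _
      _ ≤ 2 := by
        rw [diag_im_zero hZ.isHermitian i]
        have h1 := diag_re_nonneg hZ i
        have h2 := dens_diag_le_one hZ hTr i
        rw [abs_of_nonneg h1]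
        simp only [abs_zero, add_zero]
        linarith
  · have h1 := re_smul_entry_bound hZ hTr hij 1 (by simp)
    have h2 := re_smul_entry_bound hZ hTr hij (-1) (by simp)
    have h3 := re_smul_entry_bound hZ hTr hij Complex.I (by simp)
    have h4 := re_smul_entry_bound hZ hTr hij (-Complex.I) (by simp)
    simp only [one_mul, neg_mul, Complex.neg_re, Complex.I_mul_re] at h1 h2 h3 h4
    calc ‖Z i j‖ ≤ |(Z i j).re| + |(Z i j).im| :=
          Complex.norm_le_abs_re_add_abs_im _
      _ ≤ 1 + 1 := by
        gcongr <;> rw [abs_le] <;> constructor <;> linarith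
      _ = 2 := by norm_num

def Dens (N : ℕ) : Set (Matrix (Fin N) (Fin N) ℂ) := {Z | Z.PosSemidef ∧ Z.trace = 1}

lemma isClosed_nonneg_complex : IsClosed {c : ℂ | 0 ≤ c} := by
  have : {c : ℂ | 0 ≤ c} = Complex.re ⁻¹' (Set.Ici 0) ∩ Complex.im ⁻¹' {0} := by
    ext c
    simp [Complex.le_def, eq_comm]
  rw [this]
  exact (isClosed_Ici.preimage Complex.continuous_re).inter
    (isClosed_singleton.preimage Complex.continuous_im)

lemma isClosed_dens : IsClosed (Dens N) := by
  have h1 : IsClosed {Z : Matrix (Fin N) (Fin N) ℂ | Z.IsHermitian} :=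
    isClosed_eq (continuous_id.matrix_conjTranspose) continuous_id
  have h2 : ∀ x : Fin N → ℂ,
      IsClosed {Z : Matrix (Fin N) (Fin N) ℂ | 0 ≤ star x ⬝ᵥ Z *ᵥ x} := by
    intro x
    have hc : Continuous fun Z : Matrix (Fin N) (Fin N) ℂ => star x ⬝ᵥ Z *ᵥ x :=
      (continuous_const : Continuous fun _ : Matrix (Fin N) (Fin N) ℂ => star x).dotProduct
        (continuous_id.matrix_mulVec continuous_const)
    exact isClosed_nonneg_complex.preimage hc
  have h3 : IsClosed {Z : Matrix (Fin N) (Fin N) ℂ | Z.trace = 1} :=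
    isClosed_eq (continuous_id.matrix_trace) continuous_const
  have : Dens N = ({Z : Matrix (Fin N) (Fin N) ℂ | Z.IsHermitian}
      ∩ ⋂ x : Fin N → ℂ, {Z : Matrix (Fin N) (Fin N) ℂ | 0 ≤ star x ⬝ᵥ Z *ᵥ x})
      ∩ {Z : Matrix (Fin N) (Fin N) ℂ | Z.trace = 1} := by
    ext Z
    simp only [Dens, Set.mem_setOf_eq, Set.mem_inter_iff, Set.mem_iInter, Matrix.posSemidef_iff_dotProduct_mulVec]
  rw [this]
  exact ((h1.inter (isClosed_iInter h2)).inter h3)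

lemma isCompact_dens : IsCompact (Dens N) := by
  refine IsCompact.of_isClosed_subset
    (isCompact_univ_pi fun _ => isCompact_univ_pi fun _ => isCompact_closedBall (0:ℂ) 2)
    isClosed_dens ?_
  intro Z hZ
  refine Set.mem_univ_pi.mpr ?_
  intro i
  refine Set.mem_univ_pi.mpr ?_
  intro j
  rw [Metric.mem_closedBall, dist_zero_right]
  exact entry_abs_le_two hZ.1 hZ.2 i j

lemma continuous_traceMulRe (F : Matrix (Fin N) (Fin N) ℂ) :
    Continuous fun Z : Matrix (Fin N) (Fin N) ℂ => ((Z * F).trace).re :=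
  Complex.continuous_re.comp ((continuous_id.matrix_mul continuous_const).matrix_trace)

lemma dens_nonempty (hN : 0 < N) : (Dens N).Nonempty := by
  obtain ⟨Z, h1, h2, _⟩ := exists_density_attains hN (Matrix.isHermitian_one (n := Fin N) (α := ℂ))
  exact ⟨Z, h1, h2⟩

lemma isHermitian_real_smul {A : Matrix (Fin N) (Fin N) ℂ} (hA : A.IsHermitian) (c : ℝ) :
    ((c : ℂ) • A).IsHermitian := by
  unfold Matrix.IsHermitian at *
  rw [Matrix.conjTranspose_smul, Complex.star_def, Complex.conj_ofReal, hA]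

lemma herm_comb {D : ℕ} {M₀ : Matrix (Fin N) (Fin N) ℂ} (hM₀ : M₀.IsHermitian)
    {F : Fin D → Matrix (Fin N) (Fin N) ℂ} (hF : ∀ p, (F p).IsHermitian) (x : Fin D → ℝ) :
    (M₀ + ∑ p, (x p : ℂ) • F p).IsHermitian := by
  apply hM₀.add
  rw [Matrix.IsHermitian, Matrix.conjTranspose_sum]
  exact Finset.sum_congr rfl fun p _ => isHermitian_real_smul (hF p) (x p)

lemma lamMax_congr {M M' : Matrix (Fin N) (Fin N) ℂ} (hM : M.IsHermitian)
    (hM' : M'.IsHermitian) (h : M = M') : lamMax hM = lamMax hM' := by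
  subst h; rfl

lemma posSemidef_real_smul {Z : Matrix (Fin N) (Fin N) ℂ} (hZ : Z.PosSemidef) {c : ℝ}
    (hc : 0 ≤ c) : ((c : ℂ) • Z).PosSemidef := by
  refine Matrix.posSemidef_iff_dotProduct_mulVec.mpr ⟨?_, ?_⟩
  · exact isHermitian_real_smul hZ.isHermitian c
  · intro x
    rw [Matrix.smul_mulVec, dotProduct_smul]
    rw [smul_eq_mul]
    exact mul_nonneg (by exact_mod_cast hc) (hZ.dotProduct_mulVec_nonneg x)

lemma traceMulRe_comb (Y Z : Matrix (Fin N) (Fin N) ℂ) (c d : ℝ)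
    (F : Matrix (Fin N) (Fin N) ℂ) :
    (((((c : ℂ) • Y + (d : ℂ) • Z) * F)).trace).re
      = c * ((Y * F).trace).re + d * ((Z * F).trace).re := by
  rw [Matrix.add_mul, Matrix.smul_mul, Matrix.smul_mul, Matrix.trace_add,
    Matrix.trace_smul, Matrix.trace_smul]
  simp [Complex.add_re, smul_eq_mul, Complex.re_ofReal_mul]

lemma traceMulRe_affine (Z M₀ FL : Matrix (Fin N) (Fin N) ℂ) (t : ℝ) :
    ((Z * (M₀ + (t : ℂ) • FL)).trace).re
      = ((Z * M₀).trace).re + t * ((Z * FL).trace).re := by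
  rw [mul_add, Matrix.trace_add, Matrix.mul_smul, Matrix.trace_smul]
  simp [Complex.add_re, smul_eq_mul, Complex.re_ofReal_mul]

lemma traceMulRe_neg (Z F : Matrix (Fin N) (Fin N) ℂ) :
    ((Z * (-F)).trace).re = -((Z * F).trace).re := by
  rw [mul_neg, Matrix.trace_neg]
  simp

lemma min_comb {l u u' : ℝ} (h0 : 0 ≤ l) (h1 : l ≤ 1) :
    l * min u 0 + (1 - l) * min u' 0 ≤ min (l * u + (1 - l) * u') 0 := by
  apply le_min
  · have e1 : min u 0 ≤ u := min_le_left _ _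
    have e2 : min u' 0 ≤ u' := min_le_left _ _
    nlinarith
  · have e1 : min u 0 ≤ 0 := min_le_right _ _
    have e2 : min u' 0 ≤ 0 := min_le_right _ _
    nlinarith

lemma tendsto_aux (c : ℝ) :
    Filter.Tendsto (fun n : ℕ => c / ((n : ℝ) + 2)) Filter.atTop (nhds 0) := by
  have h : Filter.Tendsto (fun n : ℕ => ((n : ℝ) + 2)) Filter.atTop Filter.atTop :=
    Filter.tendsto_atTop_add_const_right _ 2 tendsto_natCast_atTop_atTop
  have h2 := h.inv_tendsto_atTop
  have := h2.const_mul c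
  simpa [div_eq_mul_inv, mul_zero] using this

theorem gen_duality (hN : 0 < N) : ∀ (D : ℕ) (M₀ : Matrix (Fin N) (Fin N) ℂ),
    M₀.IsHermitian → ∀ (F : Fin D → Matrix (Fin N) (Fin N) ℂ), (∀ p, (F p).IsHermitian) →
    ∃ v : ℝ,
      IsLeast {w : ℝ | ∃ x : Fin D → ℝ, (∀ p, x p ∈ Set.Icc (0:ℝ) 1) ∧
          ∃ h : (M₀ + ∑ p, (x p : ℂ) • F p).IsHermitian, lamMax h = w} v ∧
      IsGreatest {w : ℝ | ∃ Z ∈ Dens N,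
          w = ((Z * M₀).trace).re + ∑ p, min (((Z * F p).trace).re) 0} v := by
  intro D
  induction D with
  | zero =>
    intro M₀ hM₀ F hF
    have e : ∀ x : Fin 0 → ℝ, M₀ + ∑ p, (x p : ℂ) • F p = M₀ := by intro x; simp
    refine ⟨lamMax hM₀, ⟨⟨fun _ => 0, fun p => p.elim0, herm_comb hM₀ hF _,
      lamMax_congr _ hM₀ (e _)⟩, ?_⟩, ?_, ?_⟩
    · rintro w ⟨x, hx, h, rfl⟩
      exact (lamMax_congr h hM₀ (e x)).ge
    · obtain ⟨Z, hpsd, htr, heq⟩ := exists_density_attains hN hM₀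
      exact ⟨Z, ⟨hpsd, htr⟩, by simp [heq]⟩
    · rintro w ⟨Z, hZ, rfl⟩
      simpa using trace_mul_re_le_lamMax hM₀ hZ.1 hZ.2
  | succ D IH =>
    intro M₀ hM₀ F hF
    set FL := F (Fin.last D) with hFL
    set G : Fin D → Matrix (Fin N) (Fin N) ℂ := fun p => F p.castSucc with hG
    have hGh : ∀ p, (G p).IsHermitian := fun p => hF _
    have hFLh : FL.IsHermitian := hF _
    have hMt : ∀ t : ℝ, (M₀ + (t:ℂ) • FL).IsHermitian :=
      fun t => hM₀.add (isHermitian_real_smul hFLh t)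
    choose g hg using fun t : ℝ => IH (M₀ + (t:ℂ) • FL) (hMt t) G hGh
    set a : Matrix (Fin N) (Fin N) ℂ → ℝ :=
      fun Z => ((Z * M₀).trace).re + ∑ p, min (((Z * G p).trace).re) 0 with ha
    set b : Matrix (Fin N) (Fin N) ℂ → ℝ := fun Z => ((Z * FL).trace).re with hb
    have hacont : Continuous a := by
      rw [ha]
      exact (continuous_traceMulRe M₀).add
        (continuous_finset_sum _ fun p _ => (continuous_traceMulRe (G p)).min continuous_const)
    have hbcont : Continuous b := continuous_traceMulRe FL
    have hT : ∀ t : ℝ, {w : ℝ | ∃ Z ∈ Dens N,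
        w = ((Z * (M₀ + (t:ℂ) • FL)).trace).re + ∑ p, min (((Z * G p).trace).re) 0}
        = {w : ℝ | ∃ Z ∈ Dens N, w = a Z + t * b Z} := by
      intro t; ext w
      constructor
      · rintro ⟨Z, hZ, rfl⟩
        exact ⟨Z, hZ, by rw [traceMulRe_affine, ha, hb]; ring⟩
      · rintro ⟨Z, hZ, rfl⟩
        exact ⟨Z, hZ, by rw [traceMulRe_affine, ha, hb]; ring⟩
    have hgG : ∀ t : ℝ, IsGreatest {w | ∃ Z ∈ Dens N, w = a Z + t * b Z} (g t) := by
      intro t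
      have := (hg t).2
      rwa [hT t] at this
    have hgL : ∀ t : ℝ, IsLeast {w : ℝ | ∃ x : Fin D → ℝ, (∀ p, x p ∈ Set.Icc (0:ℝ) 1) ∧
        ∃ h : ((M₀ + (t:ℂ) • FL) + ∑ p, (x p : ℂ) • G p).IsHermitian, lamMax h = w} (g t) :=
      fun t => (hg t).1
    obtain ⟨Z₀, hZ₀⟩ := dens_nonempty hN
    have hFLnegh : (-FL).IsHermitian := hFLh.neg
    set C : ℝ := max (lamMax hFLh) (lamMax hFLnegh) with hC
    have hbBound : ∀ Z ∈ Dens N, |b Z| ≤ C := by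
      intro Z hZ
      rw [abs_le]
      constructor
      · have h := trace_mul_re_le_lamMax hFLnegh hZ.1 hZ.2
        rw [traceMulRe_neg] at h
        have : lamMax hFLnegh ≤ C := le_max_right _ _
        rw [hb]; dsimp only; linarith
      · exact le_trans (trace_mul_re_le_lamMax hFLh hZ.1 hZ.2) (le_max_left _ _)
    have hC0 : 0 ≤ C := le_trans (abs_nonneg _) (hbBound Z₀ hZ₀)
    have hgLip : ∀ s t : ℝ, g t - g s ≤ |t - s| * C := by
      intro s t
      obtain ⟨Z, hZ, hZeq⟩ := (hgG t).1
      have h1 : a Z + s * b Z ≤ g s := (hgG s).2 ⟨Z, hZ, rfl⟩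
      have h2 : |b Z| ≤ C := hbBound Z hZ
      calc g t - g s ≤ (t - s) * b Z := by rw [hZeq, sub_mul]; linarith
        _ ≤ |(t - s) * b Z| := le_abs_self _
        _ = |t - s| * |b Z| := abs_mul _ _
        _ ≤ |t - s| * C := by
            exact mul_le_mul_of_nonneg_left h2 (abs_nonneg _)
    have hgCont : Continuous g := by
      apply LipschitzWith.continuous (K := Real.toNNReal C)
      apply LipschitzWith.of_dist_le_mul
      intro t s
      rw [Real.dist_eq, Real.dist_eq, Real.coe_toNNReal C hC0]
      have h1 := hgLip s t
      have h2 := hgLip t s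
      rw [abs_sub_comm s t] at h2
      rw [abs_sub_le_iff]
      constructor <;> linarith [abs_nonneg (t - s)]
    obtain ⟨t₀, ht₀mem, ht₀min⟩ := isCompact_Icc.exists_isMinOn
      (Set.nonempty_Icc.mpr zero_le_one) hgCont.continuousOn
    have hmin : ∀ t ∈ Set.Icc (0:ℝ) 1, g t₀ ≤ g t := fun t ht => ht₀min ht
    have hsplit : ∀ Z : Matrix (Fin N) (Fin N) ℂ,
        ((Z * M₀).trace).re + ∑ p : Fin (D+1), min (((Z * F p).trace).re) 0
          = a Z + min (b Z) 0 := by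
      intro Z
      rw [Fin.sum_univ_castSucc, ha, hb]
      dsimp only
      ring
    have hub : ∀ w ∈ {w : ℝ | ∃ Z ∈ Dens N,
        w = ((Z * M₀).trace).re + ∑ p : Fin (D+1), min (((Z * F p).trace).re) 0}, w ≤ g t₀ := by
      rintro w ⟨Z, hZ, rfl⟩
      rw [hsplit Z]
      have h1 : min (b Z) 0 ≤ t₀ * b Z := by
        rcases le_or_gt 0 (b Z) with h | h
        · exact le_trans (min_le_right _ _) (mul_nonneg ht₀mem.1 h)
        · calc min (b Z) 0 ≤ b Z := min_le_left _ _
            _ ≤ t₀ * b Z := by nlinarith [ht₀mem.2]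
      have h2 : a Z + t₀ * b Z ≤ g t₀ := (hgG t₀).2 ⟨Z, hZ, rfl⟩
      linarith
    have hmatrix : ∀ (y : Fin D → ℝ) (t : ℝ),
        M₀ + ∑ p : Fin (D+1), ((Fin.snoc y t : Fin (D+1) → ℝ) p : ℂ) • F p
          = (M₀ + (t:ℂ) • FL) + ∑ p : Fin D, (y p : ℂ) • G p := by
      intro y t
      rw [Fin.sum_univ_castSucc]
      simp only [Fin.snoc_castSucc, Fin.snoc_last, hG, hFL]
      abel
    have hcaseA : t₀ < 1 → ∃ Z ∈ Dens N, 0 ≤ b Z ∧ a Z + t₀ * b Z = g t₀ := by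
      intro hlt
      set ts : ℕ → ℝ := fun n => t₀ + (1 - t₀) / ((n:ℝ) + 2) with hts
      have hpos : ∀ n : ℕ, 0 < (1 - t₀) / ((n:ℝ) + 2) := by
        intro n; apply div_pos (by linarith) (by positivity)
      have htmem : ∀ n, ts n ∈ Set.Icc (0:ℝ) 1 := by
        intro n
        constructor
        · have h1 := hpos n
          have h2 := ht₀mem.1
          simp only [hts]; linarith
        · simp only [hts]
          have h2 : (1 - t₀) / ((n:ℝ) + 2) ≤ (1 - t₀) / 1 := by
            apply div_le_div_of_nonneg_left (by linarith) one_pos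
              (by have : (0:ℝ) ≤ (n:ℝ) := Nat.cast_nonneg n; linarith)
          rw [div_one] at h2
          linarith
      have htgt : ∀ n, t₀ < ts n := by
        intro n; have := hpos n; simp only [hts]; linarith
      have htto : Filter.Tendsto ts Filter.atTop (nhds t₀) := by
        have := (tendsto_const_nhds (x := t₀) (f := Filter.atTop (α := ℕ))).add
          (tendsto_aux (1 - t₀))
        simpa [hts] using this
      choose Zs hZsmem hZseq using fun n => (hgG (ts n)).1
      obtain ⟨Zl, hZlmem, φ, hφmono, hφto⟩ := isCompact_dens.tendsto_subseq hZsmem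
      have hbnn : ∀ n, 0 ≤ b (Zs n) := by
        intro n
        have e1 : a (Zs n) + t₀ * b (Zs n) ≤ g t₀ := (hgG t₀).2 ⟨Zs n, hZsmem n, rfl⟩
        have e2 : g t₀ ≤ g (ts n) := hmin _ (htmem n)
        have e3 : g (ts n) = a (Zs n) + ts n * b (Zs n) := hZseq n
        nlinarith [htgt n]
      have hbZl : 0 ≤ b Zl :=
        ge_of_tendsto' ((hbcont.tendsto Zl).comp hφto) (fun n => hbnn (φ n))
      have hseq1 : Filter.Tendsto (fun n => a (Zs (φ n)) + ts (φ n) * b (Zs (φ n)))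
          Filter.atTop (nhds (a Zl + t₀ * b Zl)) :=
        ((hacont.tendsto Zl).comp hφto).add
          ((htto.comp hφmono.tendsto_atTop).mul ((hbcont.tendsto Zl).comp hφto))
      have hseq2 : Filter.Tendsto (fun n => g (ts (φ n))) Filter.atTop (nhds (g t₀)) :=
        (hgCont.tendsto t₀).comp (htto.comp hφmono.tendsto_atTop)
      have heqf : (fun n => a (Zs (φ n)) + ts (φ n) * b (Zs (φ n))) = fun n => g (ts (φ n)) := by
        funext n; exact (hZseq (φ n)).symm
      rw [heqf] at hseq1
      exact ⟨Zl, hZlmem, hbZl, tendsto_nhds_unique hseq1 hseq2⟩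
    have hcaseB : 0 < t₀ → ∃ Z ∈ Dens N, b Z ≤ 0 ∧ a Z + t₀ * b Z = g t₀ := by
      intro hlt
      set ts : ℕ → ℝ := fun n => t₀ - t₀ / ((n:ℝ) + 2) with hts
      have hpos : ∀ n : ℕ, 0 < t₀ / ((n:ℝ) + 2) := by
        intro n; apply div_pos hlt (by positivity)
      have htmem : ∀ n, ts n ∈ Set.Icc (0:ℝ) 1 := by
        intro n
        constructor
        · simp only [hts]
          have h2 : t₀ / ((n:ℝ) + 2) ≤ t₀ / 1 := by
            apply div_le_div_of_nonneg_left (le_of_lt hlt) one_pos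
              (by have : (0:ℝ) ≤ (n:ℝ) := Nat.cast_nonneg n; linarith)
          rw [div_one] at h2
          linarith
        · have h1 := hpos n
          have h2 := ht₀mem.2
          simp only [hts]; linarith
      have htgt : ∀ n, ts n < t₀ := by
        intro n; have := hpos n; simp only [hts]; linarith
      have htto : Filter.Tendsto ts Filter.atTop (nhds t₀) := by
        have := (tendsto_const_nhds (x := t₀) (f := Filter.atTop (α := ℕ))).sub
          (tendsto_aux t₀)
        simpa [hts] using this
      choose Zs hZsmem hZseq using fun n => (hgG (ts n)).1
      obtain ⟨Zl, hZlmem, φ, hφmono, hφto⟩ := isCompact_dens.tendsto_subseq hZsmem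
      have hbnn : ∀ n, b (Zs n) ≤ 0 := by
        intro n
        have e1 : a (Zs n) + t₀ * b (Zs n) ≤ g t₀ := (hgG t₀).2 ⟨Zs n, hZsmem n, rfl⟩
        have e2 : g t₀ ≤ g (ts n) := hmin _ (htmem n)
        have e3 : g (ts n) = a (Zs n) + ts n * b (Zs n) := hZseq n
        nlinarith [htgt n]
      have hbZl : b Zl ≤ 0 :=
        le_of_tendsto' ((hbcont.tendsto Zl).comp hφto) (fun n => hbnn (φ n))
      have hseq1 : Filter.Tendsto (fun n => a (Zs (φ n)) + ts (φ n) * b (Zs (φ n)))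
          Filter.atTop (nhds (a Zl + t₀ * b Zl)) :=
        ((hacont.tendsto Zl).comp hφto).add
          ((htto.comp hφmono.tendsto_atTop).mul ((hbcont.tendsto Zl).comp hφto))
      have hseq2 : Filter.Tendsto (fun n => g (ts (φ n))) Filter.atTop (nhds (g t₀)) :=
        (hgCont.tendsto t₀).comp (htto.comp hφmono.tendsto_atTop)
      have heqf : (fun n => a (Zs (φ n)) + ts (φ n) * b (Zs (φ n))) = fun n => g (ts (φ n)) := by
        funext n; exact (hZseq (φ n)).symm
      rw [heqf] at hseq1
      exact ⟨Zl, hZlmem, hbZl, tendsto_nhds_unique hseq1 hseq2⟩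
    have hkey : ∃ Z ∈ Dens N, a Z + min (b Z) 0 = g t₀ := by
      rcases eq_or_lt_of_le ht₀mem.1 with h0 | h0pos
      · obtain ⟨Z, hZ, hbZ, hval⟩ := hcaseA (by rw [← h0]; exact zero_lt_one)
        refine ⟨Z, hZ, ?_⟩
        rw [min_eq_right hbZ, add_zero, ← h0]
        rw [← h0, zero_mul, add_zero] at hval
        exact hval
      · rcases eq_or_lt_of_le ht₀mem.2 with h1 | h1lt
        · obtain ⟨Z, hZ, hbZ, hval⟩ := hcaseB h0pos
          refine ⟨Z, hZ, ?_⟩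
          rw [min_eq_left hbZ, h1]
          rw [h1, one_mul] at hval
          exact hval
        · obtain ⟨Zp, hZp, hbp, hvp⟩ := hcaseA h1lt
          obtain ⟨Zm, hZm, hbm, hvm⟩ := hcaseB h0pos
          rcases eq_or_lt_of_le hbp with hbp0 | hbppos
          · refine ⟨Zp, hZp, ?_⟩
            rw [← hbp0, mul_zero, add_zero] at hvp
            have : min (b Zp) 0 = 0 := by rw [← hbp0]; exact min_self 0
            rw [this, add_zero]
            exact hvp
          · rcases eq_or_lt_of_le hbm with hbm0 | hbmneg
            · refine ⟨Zm, hZm, ?_⟩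
              rw [hbm0, mul_zero, add_zero] at hvm
              rw [min_eq_left hbm, hbm0, add_zero]
              exact hvm
            · set lam : ℝ := (- b Zm) / (b Zp - b Zm) with hlam
              have hd : 0 < b Zp - b Zm := by linarith
              have hlam0 : 0 ≤ lam := div_nonneg (by linarith) (le_of_lt hd)
              have hlam1 : lam ≤ 1 := by
                rw [hlam, div_le_one hd]; linarith
              have halg : lam * b Zp + (1 - lam) * b Zm = 0 := by
                rw [hlam]
                field_simp
                ring
              set Zc : Matrix (Fin N) (Fin N) ℂ :=
                ((lam : ℝ) : ℂ) • Zp + (((1 - lam : ℝ)) : ℂ) • Zm with hZc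
              have hZcD : Zc ∈ Dens N := by
                constructor
                · exact (posSemidef_real_smul hZp.1 hlam0).add
                    (posSemidef_real_smul hZm.1 (by linarith))
                · rw [hZc, Matrix.trace_add, Matrix.trace_smul, Matrix.trace_smul,
                    hZp.2, hZm.2, smul_eq_mul, smul_eq_mul, mul_one, mul_one,
                    ← Complex.ofReal_add]
                  norm_num
              have hbc : b Zc = 0 := by
                rw [hb, hZc]
                dsimp only
                rw [traceMulRe_comb]
                exact halg
              have hamin : ∀ p : Fin D,
                  lam * min (((Zp * G p).trace).re) 0 + (1 - lam) * min (((Zm * G p).trace).re) 0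
                    ≤ min (((Zc * G p).trace).re) 0 := by
                intro p
                rw [hZc, traceMulRe_comb]
                exact min_comb hlam0 hlam1
              have hac : lam * a Zp + (1 - lam) * a Zm ≤ a Zc := by
                rw [ha]
                dsimp only
                rw [hZc, traceMulRe_comb, ← hZc]
                have hsum : ∑ p, (lam * min (((Zp * G p).trace).re) 0
                    + (1 - lam) * min (((Zm * G p).trace).re) 0)
                    ≤ ∑ p, min (((Zc * G p).trace).re) 0 :=
                  Finset.sum_le_sum (fun p _ => hamin p)
                rw [Finset.sum_add_distrib, ← Finset.mul_sum, ← Finset.mul_sum] at hsum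
                linarith
              have hge : g t₀ ≤ a Zc := by
                have e : lam * a Zp + (1 - lam) * a Zm
                    = lam * (g t₀ - t₀ * b Zp) + (1 - lam) * (g t₀ - t₀ * b Zm) := by
                  have e1 : a Zp = g t₀ - t₀ * b Zp := by linarith
                  have e2 : a Zm = g t₀ - t₀ * b Zm := by linarith
                  rw [e1, e2]
                have e3 : lam * (g t₀ - t₀ * b Zp) + (1 - lam) * (g t₀ - t₀ * b Zm)
                    = g t₀ - t₀ * (lam * b Zp + (1 - lam) * b Zm) := by ring
                rw [e3, halg, mul_zero, sub_zero] at e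
                linarith
              have hle : a Zc + min (b Zc) 0 ≤ g t₀ := by
                have := hub _ ⟨Zc, hZcD, rfl⟩
                rwa [hsplit Zc] at this
              refine ⟨Zc, hZcD, ?_⟩
              rw [hbc, min_self, add_zero]
              rw [hbc, min_self, add_zero] at hle
              exact le_antisymm hle hge
    obtain ⟨x₁, hxbox₁, hxh₁, hxeq₁⟩ := (hgL t₀).1
    refine ⟨g t₀, ⟨⟨Fin.snoc x₁ t₀, ?_, herm_comb hM₀ hF _, ?_⟩, ?_⟩, ?_, hub⟩
    · intro p
      refine Fin.lastCases ?_ ?_ p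
      · simpa [Fin.snoc_last] using ht₀mem
      · intro i; simpa [Fin.snoc_castSucc] using hxbox₁ i
    · rw [lamMax_congr _ hxh₁ (hmatrix x₁ t₀)]
      exact hxeq₁
    · rintro w ⟨x, hxbox, h, rfl⟩
      set t := x (Fin.last D) with htdef
      set y : Fin D → ℝ := fun p => x p.castSucc with hy
      have hx' : x = Fin.snoc y t := by
        funext p
        refine Fin.lastCases ?_ ?_ p
        · rw [Fin.snoc_last]
        · intro i; rw [Fin.snoc_castSucc]
      have e := hmatrix y t
      rw [← hx'] at e
      have hmem : lamMax h ∈ {w : ℝ | ∃ x : Fin D → ℝ, (∀ p, x p ∈ Set.Icc (0:ℝ) 1) ∧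
          ∃ h' : ((M₀ + (t:ℂ) • FL) + ∑ p, (x p : ℂ) • G p).IsHermitian, lamMax h' = w} :=
        ⟨y, fun p => hxbox _, e ▸ h, lamMax_congr (e ▸ h) h e.symm⟩
      have h1 : g t ≤ lamMax h := (hgL t).2 hmem
      have h2 : g t₀ ≤ g t := hmin t (hxbox (Fin.last D))
      linarith
    · obtain ⟨Z, hZ, hval⟩ := hkey
      exact ⟨Z, hZ, by rw [hsplit Z, hval]⟩
/-- min_{x ∈ [0,1]^D} λ_max(I + ∑_p x_p F_p)
= max over density matrices Z of (1 + ∑_p min(Tr(Z F_p), 0)), both attained. -/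
theorem minimax_duality_nonneg_box (D N : ℕ) (hN : 0 < N)
    (F : Fin D → Matrix (Fin N) (Fin N) ℂ) (hF : ∀ p, (F p).IsHermitian) :
    ∃ v : ℝ,
      IsLeast {w : ℝ | ∃ x : Fin D → ℝ, (∀ p, x p ∈ Set.Icc (0 : ℝ) 1) ∧
          ∃ h : ((1 : Matrix (Fin N) (Fin N) ℂ) + ∑ p, (x p : ℂ) • F p).IsHermitian,
            lamMax h = w} v ∧
      IsGreatest {w : ℝ | ∃ Z : Matrix (Fin N) (Fin N) ℂ,
          Z.IsHermitian ∧ Z.PosSemidef ∧ Z.trace = 1 ∧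
          w = 1 + ∑ p, min ((Z * F p).trace.re) 0} v := by
  obtain ⟨v, hL, hG⟩ := gen_duality hN D 1 Matrix.isHermitian_one F hF
  refine ⟨v, hL, ?_⟩
  have hset : {w : ℝ | ∃ Z : Matrix (Fin N) (Fin N) ℂ,
      Z.IsHermitian ∧ Z.PosSemidef ∧ Z.trace = 1 ∧
      w = 1 + ∑ p, min ((Z * F p).trace.re) 0}
      = {w : ℝ | ∃ Z ∈ Dens N,
      w = ((Z * (1 : Matrix (Fin N) (Fin N) ℂ)).trace).re
        + ∑ p, min (((Z * F p).trace).re) 0} := by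
    ext w
    constructor
    · rintro ⟨Z, _, hpsd, htr, rfl⟩
      refine ⟨Z, ⟨hpsd, htr⟩, ?_⟩
      rw [mul_one, htr]
      simp
    · rintro ⟨Z, ⟨hpsd, htr⟩, rfl⟩
      refine ⟨Z, hpsd.isHermitian, hpsd, htr, ?_⟩
      rw [mul_one, htr]
      simp
  rw [hset]
  exact hG
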